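/- (Orbits hitting a subvariety along arithmetic progressions) Let F: Z_p^n → Z_p^n be analytic with an orbit uniformization: there exist N ≥ 1 and, for each residue 0 ≤ i < N, an analytic map θ_i: Z_p → Z_p^n with θ_i(k) = F^{∘(Nk+i)}(x) for all k ∈ N, for a fixed x ∈ Z_p^n. Let V ⊆ Z_p^n be the zero set of finitely many polynomials. Then {m ∈ N : F^{∘m}(x) ∈ V} is the union of a finite set and finitely many arithmetic progressions with common difference N. -/

import Mathlib

open scoped BigOperators

open Filter Topology

section StrassmannTools

variable {p : ℕ} [Fact p.Prime]

lemma pa_tendsto_iff {ι : Type*} (g : ι → ℚ_[p]) :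
    Tendsto (fun i => ‖g i‖) cofinite (𝓝 0) ↔ ∀ ε > 0, {i | ε ≤ ‖g i‖}.Finite := by
  rw [Metric.tendsto_nhds]
  constructor
  · intro h ε hε
    refine Set.Finite.subset (Filter.eventually_cofinite.mp (h ε hε)) ?_
    intro i hi
    simpa [Real.dist_eq, abs_norm, not_lt] using hi
  · intro h ε hε
    rw [Filter.eventually_cofinite]
    refine Set.Finite.subset (h ε hε) ?_
    intro i hi
    simpa [Real.dist_eq, abs_norm, not_lt] using hi

lemma pa_summable {ι : Type*} {g : ι → ℚ_[p]}
    (h : Tendsto (fun i => ‖g i‖) cofinite (𝓝 0)) : Summable g :=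
  NonarchimedeanAddGroup.summable_of_tendsto_cofinite_zero
    (tendsto_zero_iff_norm_tendsto_zero.mpr h)

lemma pa_coe_norm_le_one (t : ℤ_[p]) : ‖(t : ℚ_[p])‖ ≤ 1 := by
  rw [PadicInt.padic_norm_e_of_padicInt]; exact t.norm_le_one

lemma pa_mul_le {x y : ℚ_[p]} (hy : ‖y‖ ≤ 1) : ‖x * y‖ ≤ ‖x‖ := by
  rw [norm_mul]
  calc ‖x‖ * ‖y‖ ≤ ‖x‖ * 1 := by gcongr
    _ = ‖x‖ := mul_one _

lemma pa_nat_norm_le_one (n : ℕ) : ‖(n : ℚ_[p])‖ ≤ 1 := by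
  have := Padic.norm_int_le_one (p := p) (n : ℤ)
  simpa using this

lemma pa_pow_le_one (t : ℤ_[p]) (k : ℕ) : ‖(t : ℚ_[p]) ^ k‖ ≤ 1 := by
  rw [norm_pow]; exact pow_le_one₀ (norm_nonneg _) (pa_coe_norm_le_one t)

lemma pa_term_norm_le (b : ℕ → ℚ_[p]) (t : ℤ_[p]) (k : ℕ) :
    ‖b k * (t : ℚ_[p]) ^ k‖ ≤ ‖b k‖ := by
  rw [norm_mul]
  calc ‖b k‖ * ‖(t:ℚ_[p])^k‖ ≤ ‖b k‖ * 1 := by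
        gcongr
        rw [norm_pow]; exact pow_le_one₀ (norm_nonneg _) (pa_coe_norm_le_one t)
      _ = ‖b k‖ := mul_one _

lemma pa_recenter (b : ℕ → ℚ_[p]) (hb : Tendsto (fun k => ‖b k‖) cofinite (𝓝 0)) (a : ℤ_[p]) :
    ∃ c : ℕ → ℚ_[p],
      Tendsto (fun j => ‖c j‖) cofinite (𝓝 0) ∧
      (∀ u : ℤ_[p],
        ∑' k, b k * ((a + u : ℤ_[p]) : ℚ_[p]) ^ k = ∑' j, c j * (u : ℚ_[p]) ^ j) := by
  classical
  set A : ℚ_[p] := (a : ℚ_[p]) with hA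
  refine ⟨fun j => ∑' k, b (k + j) * (((k + j).choose j : ℕ) : ℚ_[p]) * A ^ k, ?_, ?_⟩
  · -- decay of c
    rw [Nat.cofinite_eq_atTop] at hb ⊢
    rw [Metric.tendsto_atTop] at hb ⊢
    intro ε hε
    obtain ⟨M, hM⟩ := hb (ε / 2) (by linarith)
    refine ⟨M, fun j hj => ?_⟩
    have hbound : ∀ k : ℕ, ‖b (k + j) * (((k + j).choose j : ℕ) : ℚ_[p]) * A ^ k‖ ≤ ε / 2 := by
      intro k
      have h1 : ‖b (k + j) * (((k + j).choose j : ℕ) : ℚ_[p])‖ ≤ ‖b (k + j)‖ :=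
        pa_mul_le (pa_nat_norm_le_one _)
      have h2 := pa_mul_le (x := b (k + j) * (((k + j).choose j : ℕ) : ℚ_[p]))
        (pa_pow_le_one a k)
      have h3 : ‖b (k + j)‖ ≤ ε / 2 := by
        have := hM (k + j) (le_trans hj (Nat.le_add_left _ _))
        rw [Real.dist_eq, sub_zero, abs_norm] at this
        linarith
      calc ‖b (k + j) * (((k + j).choose j : ℕ) : ℚ_[p]) * A ^ k‖
          ≤ ‖b (k + j) * (((k + j).choose j : ℕ) : ℚ_[p])‖ := h2
        _ ≤ ‖b (k + j)‖ := h1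
        _ ≤ ε / 2 := h3
    have := IsUltrametricDist.norm_tsum_le_of_forall_le_of_nonneg (by linarith : (0:ℝ) ≤ ε / 2)
      hbound
    rw [Real.dist_eq, sub_zero, abs_norm]
    linarith
  · -- the identity
    intro u
    set U : ℚ_[p] := (u : ℚ_[p]) with hU
    set G : ℕ × ℕ → ℚ_[p] := fun q =>
      if q.2 ≤ q.1 then b q.1 * ((q.1.choose q.2 : ℕ) : ℚ_[p]) * A ^ (q.1 - q.2) * U ^ q.2
      else 0 with hG
    have hGnorm : ∀ q, ‖G q‖ ≤ ‖b q.1‖ := by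
      intro q
      rw [hG]
      dsimp only
      split_ifs with h
      · exact le_trans (pa_mul_le (pa_pow_le_one u q.2))
          (le_trans (pa_mul_le (pa_pow_le_one a _)) (pa_mul_le (pa_nat_norm_le_one _)))
      · simp
    have hGsum : Summable G := by
      apply pa_summable
      rw [pa_tendsto_iff]
      intro ε hε
      have hK : {k : ℕ | ε ≤ ‖b k‖}.Finite := (pa_tendsto_iff _).mp hb ε hε
      refine Set.Finite.subset (hK.biUnion (fun k _ =>
        ((Set.finite_singleton k).prod (Set.finite_Iic k)))) ?_
      intro q hq
      have hq' : ε ≤ ‖b q.1‖ := le_trans hq (hGnorm q)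
      have hle : q.2 ≤ q.1 := by
        by_contra hcon
        have : G q = 0 := by rw [hG]; exact if_neg hcon
        rw [Set.mem_setOf_eq, this, norm_zero] at hq
        linarith
      exact Set.mem_biUnion hq' ⟨rfl, hle⟩
    have hrow : ∀ k, Summable fun j => G (k, j) := by
      intro k
      apply summable_of_ne_finset_zero (s := Finset.range (k + 1))
      intro j hj
      rw [hG]
      exact if_neg (by simpa using hj)
    have hcol : ∀ j, Summable fun k => G (k, j) := fun j => hGsum.prod_symm.prod_factor j
    -- step 1 : expand each power
    have step1 : ∑' k, b k * ((a + u : ℤ_[p]) : ℚ_[p]) ^ k = ∑' k, ∑' j, G (k, j) := by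
      apply tsum_congr
      intro k
      rw [tsum_eq_sum (s := Finset.range (k + 1))
        (fun j hj => by rw [hG]; exact if_neg (by simpa using hj))]
      have hcast : ((a + u : ℤ_[p]) : ℚ_[p]) = U + A := by
        rw [PadicInt.coe_add]; ring
      rw [hcast, add_pow, Finset.mul_sum]
      apply Finset.sum_congr rfl
      intro j hj
      have hjk : j ≤ k := Nat.lt_succ_iff.mp (Finset.mem_range.mp hj)
      simp only [hG]
      rw [if_pos hjk]

      ring
    -- step 2/3 : swap
    have step2 : ∑' k, ∑' j, G (k, j) = ∑' j, ∑' k, G (k, j) := by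
      have e1 : ∑' (k) (j), G (k, j) = ∑' q : ℕ × ℕ, G q := (Summable.tsum_prod' hGsum hrow).symm
      have e2 : ∑' q : ℕ × ℕ, G q.swap = ∑' (j) (k), G (k, j) :=
        Summable.tsum_prod' hGsum.prod_symm (fun j => hcol j)
      have e3 : ∑' q : ℕ × ℕ, G q.swap = ∑' q : ℕ × ℕ, G q :=
        (Equiv.prodComm ℕ ℕ).tsum_eq G
      rw [e1, ← e3, e2]
    -- step 4 : identify columns
    have step4 : ∀ j, ∑' k, G (k, j)
        = (∑' k, b (k + j) * (((k + j).choose j : ℕ) : ℚ_[p]) * A ^ k) * U ^ j := by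
      intro j
      have := (Summable.sum_add_tsum_nat_add (f := fun k => G (k, j)) j (hcol j)).symm
      have hzero : ∑ i ∈ Finset.range j, G (i, j) = 0 := by
        apply Finset.sum_eq_zero
        intro i hi
        rw [hG]
        exact if_neg (by simpa using Nat.not_le.mpr (Finset.mem_range.mp hi))
      rw [this, hzero, zero_add]
      rw [← tsum_mul_right]
      apply tsum_congr
      intro k
      have hle : j ≤ k + j := Nat.le_add_left _ _
      simp only [hG]
      rw [if_pos hle, Nat.add_sub_cancel]
    rw [step1, step2]
    exact tsum_congr fun j => step4 j

lemma pa_term_summable (b : ℕ → ℚ_[p]) (hb : Tendsto (fun k => ‖b k‖) cofinite (𝓝 0))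
    (t : ℤ_[p]) : Summable fun k => b k * (t : ℚ_[p]) ^ k := by
  apply pa_summable
  apply squeeze_zero (fun k => norm_nonneg _) (fun k => pa_mul_le (pa_pow_le_one t k)) hb

lemma pa_local_nonvanishing (c : ℕ → ℚ_[p])
    (hc : Tendsto (fun j => ‖c j‖) cofinite (𝓝 0)) (hne : ∃ J, c J ≠ 0) :
    ∃ ε > 0, ∀ u : ℤ_[p], u ≠ 0 → ‖(u : ℚ_[p])‖ < ε →
      ∑' j, c j * (u : ℚ_[p]) ^ j ≠ 0 := by
  classical
  set J := Nat.find hne with hJdef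
  have hJ : c J ≠ 0 := Nat.find_spec hne
  have hmin : ∀ m, m < J → c m = 0 := fun m hm => by
    by_contra hcon; exact Nat.find_min hne hm hcon
  obtain ⟨C, hC⟩ := hc.bddAbove_range_of_cofinite
  have hCb : ∀ j, ‖c j‖ ≤ C := fun j => hC ⟨j, rfl⟩
  have hC0 : 0 ≤ C := le_trans (norm_nonneg _) (hCb 0)
  refine ⟨‖c J‖ / (C + 1), div_pos (norm_pos_iff.mpr hJ) (by linarith), ?_⟩
  intro u hu hlt
  set U : ℚ_[p] := (u : ℚ_[p]) with hU
  have hU1 : ‖U‖ ≤ 1 := pa_coe_norm_le_one u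
  have hU0 : 0 < ‖U‖ := by
    rw [norm_pos_iff]
    intro h
    exact hu (by rwa [hU, PadicInt.coe_eq_zero] at h)
  have hsum := pa_term_summable c hc u
  have hsplit := (Summable.sum_add_tsum_nat_add (f := fun j => c j * U ^ j) (J + 1) hsum).symm
  have hhead : ∑ j ∈ Finset.range (J + 1), c j * U ^ j = c J * U ^ J := by
    rw [Finset.sum_eq_single_of_mem J (Finset.self_mem_range_succ J)]
    intro i hi hne'
    have : i < J := lt_of_le_of_ne (Nat.lt_succ_iff.mp (Finset.mem_range.mp hi)) hne'
    rw [hmin i this, zero_mul]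
  have htail : ‖∑' j : ℕ, c (j + (J + 1)) * U ^ (j + (J + 1))‖ ≤ C * ‖U‖ ^ (J + 1) := by
    apply IsUltrametricDist.norm_tsum_le_of_forall_le_of_nonneg
      (by positivity)
    intro j
    rw [norm_mul, norm_pow]
    have h1 : ‖U‖ ^ (j + (J + 1)) ≤ ‖U‖ ^ (J + 1) :=
      pow_le_pow_of_le_one (le_of_lt hU0) hU1 (Nat.le_add_left _ _)
    exact mul_le_mul (hCb _) h1 (by positivity) hC0
  have hkey : ‖∑' j : ℕ, c (j + (J + 1)) * U ^ (j + (J + 1))‖ < ‖c J * U ^ J‖ := by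
    rw [norm_mul, norm_pow]
    calc ‖∑' j : ℕ, c (j + (J + 1)) * U ^ (j + (J + 1))‖ ≤ C * ‖U‖ ^ (J + 1) := htail
      _ = (C * ‖U‖) * ‖U‖ ^ J := by ring
      _ ≤ ((C + 1) * ‖U‖) * ‖U‖ ^ J := by gcongr; linarith
      _ < ‖c J‖ * ‖U‖ ^ J := by
          have hlt2 : (C + 1) * ‖U‖ < ‖c J‖ := by
            calc (C + 1) * ‖U‖ < (C + 1) * (‖c J‖ / (C + 1)) := by gcongr
              _ = ‖c J‖ := by field_simp
          have hpow : (0:ℝ) < ‖U‖ ^ J := by positivity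
          exact mul_lt_mul_of_pos_right hlt2 hpow
  intro hzero
  rw [hsplit, hhead] at hzero
  have heq : c J * U ^ J = -(∑' j : ℕ, c (j + (J + 1)) * U ^ (j + (J + 1))) := by
    linear_combination hzero
  rw [heq, norm_neg] at hkey
  exact lt_irrefl _ hkey

lemma pa_dichotomy (b : ℕ → ℚ_[p]) (hb : Tendsto (fun k => ‖b k‖) cofinite (𝓝 0)) :
    (∀ t : ℤ_[p], ∑' k, b k * (t : ℚ_[p]) ^ k = 0) ∨
      {m : ℕ | ∑' k, b k * ((m : ℤ_[p]) : ℚ_[p]) ^ k = 0}.Finite := by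
  classical
  by_cases hfin : {m : ℕ | ∑' k, b k * ((m : ℤ_[p]) : ℚ_[p]) ^ k = 0}.Finite
  · exact Or.inr hfin
  left
  set Z := {m : ℕ | ∑' k, b k * ((m : ℤ_[p]) : ℚ_[p]) ^ k = 0} with hZ
  have hZinf : Z.Infinite := hfin
  have himg : ((fun m : ℕ => (m : ℤ_[p])) '' Z).Infinite :=
    hZinf.image (Set.injOn_of_injective (fun a b h => by exact_mod_cast h))
  obtain ⟨a, ha⟩ := himg.exists_accPt_principal
  obtain ⟨c, hcdec, hcform⟩ := pa_recenter b hb a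
  by_cases hc0 : ∀ j, c j = 0
  · intro t
    have := hcform (t - a)
    rw [add_sub_cancel] at this
    rw [this]
    simp [hc0]
  · exfalso
    push_neg at hc0
    obtain ⟨ε, hε, hloc⟩ := pa_local_nonvanishing c hcdec hc0
    obtain ⟨y, hy, hya⟩ := (accPt_iff_nhds.mp ha) (Metric.ball a ε) (Metric.ball_mem_nhds a hε)
    obtain ⟨m, hmZ, hmy⟩ := hy.2
    have hy0 : y - a ≠ 0 := sub_ne_zero_of_ne hya
    have hdist : ‖((y - a : ℤ_[p]) : ℚ_[p])‖ < ε := by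
      rw [PadicInt.padic_norm_e_of_padicInt]
      have := Metric.mem_ball.mp hy.1
      rwa [dist_eq_norm] at this
    have hnz := hloc (y - a) hy0 hdist
    have hval := hcform (y - a)
    rw [add_sub_cancel] at hval
    apply hnz
    rw [← hval, ← hmy]
    exact hmZ

/-- A function given by a power series with coefficients tending to zero. -/
def IsRestr {p : ℕ} [Fact p.Prime] (f : ℤ_[p] → ℚ_[p]) : Prop :=
  ∃ b : ℕ → ℚ_[p], Tendsto (fun k => ‖b k‖) cofinite (𝓝 0) ∧
    ∀ t : ℤ_[p], f t = ∑' k, b k * (t : ℚ_[p]) ^ k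

lemma isRestr_const (r : ℚ_[p]) : IsRestr (fun _ => r) := by
  classical
  refine ⟨fun k => if k = 0 then r else 0, ?_, ?_⟩
  · rw [pa_tendsto_iff]
    intro ε hε
    refine Set.Finite.subset (Set.finite_singleton 0) ?_
    intro k hk
    rcases eq_or_ne k 0 with rfl | hk0
    · exact rfl
    · simp only [Set.mem_setOf_eq, if_neg hk0, norm_zero] at hk; linarith
  · intro t
    rw [tsum_eq_single 0 (fun k hk => by simp [hk])]
    simp

lemma isRestr_add {f g : ℤ_[p] → ℚ_[p]} (hf : IsRestr f) (hg : IsRestr g) :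
    IsRestr (fun t => f t + g t) := by
  obtain ⟨b, hb, hbf⟩ := hf
  obtain ⟨b', hb', hgf⟩ := hg
  refine ⟨fun k => b k + b' k, ?_, ?_⟩
  · apply squeeze_zero (fun k => norm_nonneg _) (fun k => norm_add_le _ _)
    simpa using hb.add hb'
  · intro t
    show f t + g t = _
    rw [hbf, hgf, ← Summable.tsum_add (pa_term_summable b hb t) (pa_term_summable b' hb' t)]
    exact tsum_congr fun k => by ring

lemma isRestr_mul {f g : ℤ_[p] → ℚ_[p]} (hf : IsRestr f) (hg : IsRestr g) :
    IsRestr (fun t => f t * g t) := by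
  classical
  obtain ⟨b, hb, hbf⟩ := hf
  obtain ⟨b', hb', hgf⟩ := hg
  obtain ⟨C, hC⟩ := hb.bddAbove_range_of_cofinite
  obtain ⟨C', hC'⟩ := hb'.bddAbove_range_of_cofinite
  have hCb : ∀ k, ‖b k‖ ≤ C := fun k => hC ⟨k, rfl⟩
  have hCb' : ∀ k, ‖b' k‖ ≤ C' := fun k => hC' ⟨k, rfl⟩
  have hC0 : 0 ≤ C := le_trans (norm_nonneg _) (hCb 0)
  have hC0' : 0 ≤ C' := le_trans (norm_nonneg _) (hCb' 0)
  set D : ℝ := max C C' + 1 with hD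
  have hmax0 : 0 ≤ max C C' := le_trans hC0 (le_max_left _ _)
  have hD1 : 1 ≤ D := by simp only [hD]; linarith
  have hD0 : 0 < D := lt_of_lt_of_le one_pos hD1
  have hbD : ∀ k, ‖b k‖ ≤ D := fun k =>
    le_trans (hCb k) (by simp only [hD]; linarith [le_max_left C C'])
  have hbD' : ∀ k, ‖b' k‖ ≤ D := fun k =>
    le_trans (hCb' k) (by simp only [hD]; linarith [le_max_right C C'])
  refine ⟨fun m => ∑ k ∈ Finset.range (m + 1), b k * b' (m - k), ?_, ?_⟩
  · -- decay of the convolution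
    rw [Nat.cofinite_eq_atTop, Metric.tendsto_atTop] at hb hb' ⊢
    intro ε hε
    have hδ : 0 < ε / 2 / D := by positivity
    obtain ⟨M, hM⟩ := hb _ hδ
    obtain ⟨M', hM'⟩ := hb' _ hδ
    refine ⟨M + M', fun m hm => ?_⟩
    rw [Real.dist_eq, sub_zero, abs_norm]
    have hbound : ∀ k ∈ Finset.range (m + 1), ‖b k * b' (m - k)‖ ≤ ε / 2 := by
      intro k hk
      rw [norm_mul]
      rcases le_or_gt M k with h | h
      · have h1 : ‖b k‖ ≤ ε / 2 / D := by
          have := hM k h; rw [Real.dist_eq, sub_zero, abs_norm] at this; linarith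
        calc ‖b k‖ * ‖b' (m - k)‖ ≤ (ε / 2 / D) * D :=
              mul_le_mul h1 (hbD' _) (norm_nonneg _) (by positivity)
          _ = ε / 2 := div_mul_cancel₀ _ (ne_of_gt hD0)
      · have hk' : M' ≤ m - k := by omega
        have h1 : ‖b' (m - k)‖ ≤ ε / 2 / D := by
          have := hM' _ hk'; rw [Real.dist_eq, sub_zero, abs_norm] at this; linarith
        calc ‖b k‖ * ‖b' (m - k)‖ ≤ D * (ε / 2 / D) :=
              mul_le_mul (hbD k) h1 (norm_nonneg _) (by positivity)
          _ = ε / 2 := by rw [mul_comm]; exact div_mul_cancel₀ _ (ne_of_gt hD0)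
    have := IsUltrametricDist.norm_sum_le_of_forall_le_of_nonneg
      (by linarith : (0:ℝ) ≤ ε / 2) hbound
    linarith
  · -- the Cauchy-product identity
    intro t
    set U : ℚ_[p] := (t : ℚ_[p]) with hUdef
    set H : ℕ × ℕ → ℚ_[p] := fun q => (b q.1 * U ^ q.1) * (b' q.2 * U ^ q.2) with hH
    have hHnorm : ∀ q : ℕ × ℕ, ‖H q‖ ≤ ‖b q.1‖ * ‖b' q.2‖ := by
      intro q
      simp only [hH]
      rw [norm_mul]
      exact mul_le_mul (pa_mul_le (pa_pow_le_one t _)) (pa_mul_le (pa_pow_le_one t _))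
        (norm_nonneg _) (norm_nonneg _)
    have hprodlt : ∀ (x y ε₀ : ℝ), 0 ≤ x → 0 ≤ y → y ≤ D → 0 < ε₀ → x < ε₀ / D → x * y < ε₀ := by
      intro x y ε₀ hx hy hyD hε₀ hxlt
      calc x * y ≤ x * D := by gcongr
        _ < (ε₀ / D) * D := by gcongr
        _ = ε₀ := div_mul_cancel₀ _ (ne_of_gt hD0)
    have hHsum : Summable H := by
      apply pa_summable
      rw [pa_tendsto_iff]
      intro ε hε
      have hεD : 0 < ε / D := by positivity
      have hKb : {k : ℕ | ε / D ≤ ‖b k‖}.Finite := (pa_tendsto_iff _).mp hb _ hεD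
      have hKb' : {l : ℕ | ε / D ≤ ‖b' l‖}.Finite := (pa_tendsto_iff _).mp hb' _ hεD
      refine Set.Finite.subset (hKb.prod hKb') ?_
      rintro ⟨k, l⟩ hq
      have hq' : ε ≤ ‖b k‖ * ‖b' l‖ := le_trans hq (hHnorm (k, l))
      constructor
      · by_contra hcon
        rw [Set.mem_setOf_eq, not_le] at hcon
        exact absurd hq' (not_le.mpr (hprodlt _ _ ε (norm_nonneg _) (norm_nonneg _) (hbD' l) hε hcon))
      · by_contra hcon
        rw [Set.mem_setOf_eq, not_le] at hcon
        have := hprodlt _ _ ε (norm_nonneg _) (norm_nonneg _) (hbD k) hε hcon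
        rw [mul_comm] at this
        exact absurd hq' (not_le.mpr this)
    set G' : ℕ × ℕ → ℚ_[p] := fun r =>
      if r.2 ≤ r.1 then (b r.2 * b' (r.1 - r.2)) * U ^ r.1 else 0 with hG'
    have hG'norm : ∀ r : ℕ × ℕ, ‖G' r‖ ≤ ‖b r.2‖ * ‖b' (r.1 - r.2)‖ := by
      intro r
      simp only [hG']
      split_ifs with h
      · exact le_trans (pa_mul_le (pa_pow_le_one t _)) (le_of_eq (norm_mul _ _))
      · rw [norm_zero]; positivity
    have hG'sum : Summable G' := by
      apply pa_summable
      rw [pa_tendsto_iff]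
      intro ε hε
      have hεD : 0 < ε / D := by positivity
      have hKb : {k : ℕ | ε / D ≤ ‖b k‖}.Finite := (pa_tendsto_iff _).mp hb _ hεD
      have hKb' : {l : ℕ | ε / D ≤ ‖b' l‖}.Finite := (pa_tendsto_iff _).mp hb' _ hεD
      set S := {r : ℕ × ℕ | ε ≤ ‖G' r‖} with hS
      have hmemS : ∀ r ∈ S, r.2 ≤ r.1 ∧ ε / D ≤ ‖b r.2‖ ∧ ε / D ≤ ‖b' (r.1 - r.2)‖ := by
        intro r hr
        have hle : r.2 ≤ r.1 := by
          by_contra hcon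
          have : G' r = 0 := by simp only [hG']; exact if_neg hcon
          rw [hS, Set.mem_setOf_eq, this, norm_zero] at hr
          linarith
        have hq' : ε ≤ ‖b r.2‖ * ‖b' (r.1 - r.2)‖ := le_trans hr (hG'norm r)
        refine ⟨hle, ?_, ?_⟩
        · by_contra hcon
          rw [not_le] at hcon
          exact absurd hq' (not_le.mpr
            (hprodlt _ _ ε (norm_nonneg _) (norm_nonneg _) (hbD' (r.1 - r.2)) hε hcon))
        · by_contra hcon
          rw [not_le] at hcon
          have := hprodlt _ _ ε (norm_nonneg _) (norm_nonneg _) (hbD r.2) hε hcon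
          rw [mul_comm] at this
          exact absurd hq' (not_le.mpr this)
      have himg : ((fun r : ℕ × ℕ => (r.2, r.1 - r.2)) '' S).Finite := by
        refine Set.Finite.subset (hKb.prod hKb') ?_
        rintro q ⟨r, hr, rfl⟩
        exact ⟨(hmemS r hr).2.1, (hmemS r hr).2.2⟩
      refine Set.Finite.of_finite_image himg ?_
      intro r hr r' hr' heq
      have h1 := (hmemS r hr).1
      have h2 := (hmemS r' hr').1
      have e1 : r.2 = r'.2 := congrArg Prod.fst heq
      have e2 : r.1 - r.2 = r'.1 - r'.2 := congrArg Prod.snd heq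
      have : r.1 = r'.1 := by omega
      exact Prod.ext this e1
    -- row summability
    have hHrow : ∀ k, Summable fun l => H (k, l) := by
      intro k
      simp only [hH]
      exact (pa_term_summable b' hb' t).mul_left _
    have hG'row : ∀ m, Summable fun k => G' (m, k) := by
      intro m
      apply summable_of_ne_finset_zero (s := Finset.range (m + 1))
      intro k hk
      simp only [hG']
      exact if_neg (by simpa using hk)
    -- reindexing
    have hbij : ∑' r, G' r = ∑' q, H q := by
      refine tsum_eq_tsum_of_ne_zero_bij (f := G') (g := H)
        (fun q => (q.1.1 + q.1.2, q.1.1)) ?_ ?_ ?_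
      · rintro ⟨⟨k, l⟩, hq⟩ ⟨⟨k', l'⟩, hq'⟩ heq
        simp only [Prod.mk.injEq] at heq
        obtain ⟨h1, h2⟩ := heq
        have hk : k = k' := h2
        have hl : l = l' := by omega
        subst hk; subst hl; rfl
      · rintro ⟨m, k⟩ hr
        rw [Function.mem_support] at hr
        have hle : k ≤ m := by
          by_contra hcon
          exact hr (by simp only [hG']; exact if_neg hcon)
        obtain ⟨l, rfl⟩ : ∃ l, m = k + l := ⟨m - k, by omega⟩
        have hHval : H (k, l) = G' (k + l, k) := by
          simp only [hH, hG', if_pos (Nat.le_add_right k l), Nat.add_sub_cancel_left]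
          rw [pow_add]; ring
        exact ⟨⟨(k, l), by rw [Function.mem_support, hHval]; exact hr⟩, rfl⟩
      · rintro ⟨⟨k, l⟩, hq⟩
        simp only [hG', hH, if_pos (Nat.le_add_right k l), Nat.add_sub_cancel_left]
        rw [pow_add]
        ring
    -- assembling
    show f t * g t = _
    rw [hbf, hgf]
    have e0 : (∑' k, b k * U ^ k) * (∑' l, b' l * U ^ l) = ∑' k, ∑' l, H (k, l) := by
      rw [← tsum_mul_right]
      apply tsum_congr
      intro k
      rw [← tsum_mul_left]
    have e1 : ∑' k, ∑' l, H (k, l) = ∑' q, H q := (Summable.tsum_prod' hHsum hHrow).symm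
    have e2 : ∑' r, G' r = ∑' m, ∑' k, G' (m, k) := Summable.tsum_prod' hG'sum hG'row
    have e3 : ∀ m, ∑' k, G' (m, k)
        = (∑ k ∈ Finset.range (m + 1), b k * b' (m - k)) * U ^ m := by
      intro m
      rw [tsum_eq_sum (s := Finset.range (m + 1))
        (fun k hk => by simp only [hG']; exact if_neg (by simpa using hk))]
      rw [Finset.sum_mul]
      apply Finset.sum_congr rfl
      intro k hk
      simp only [hG']
      rw [if_pos (Nat.lt_succ_iff.mp (Finset.mem_range.mp hk))]
    rw [e0, e1, ← hbij, e2]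
    exact tsum_congr fun m => e3 m


lemma isRestr_eval {n : ℕ} (θi : ℤ_[p] → Fin n → ℚ_[p])
    (h : ∀ j, IsRestr (fun t => θi t j)) (P : MvPolynomial (Fin n) ℚ_[p]) :
    IsRestr (fun t => MvPolynomial.eval (θi t) P) := by
  induction P using MvPolynomial.induction_on with
  | C r =>
      have : (fun t : ℤ_[p] => MvPolynomial.eval (θi t) (MvPolynomial.C r)) = fun _ => r :=
        funext fun t => MvPolynomial.eval_C r
      rw [this]; exact isRestr_const r
  | add P Q hP hQ =>
      have : (fun t : ℤ_[p] => MvPolynomial.eval (θi t) (P + Q))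
          = fun t => MvPolynomial.eval (θi t) P + MvPolynomial.eval (θi t) Q :=
        funext fun t => by rw [MvPolynomial.eval_add]
      rw [this]; exact isRestr_add hP hQ
  | mul_X P j hP =>
      have : (fun t : ℤ_[p] => MvPolynomial.eval (θi t) (P * MvPolynomial.X j))
          = fun t => MvPolynomial.eval (θi t) P * θi t j :=
        funext fun t => by rw [MvPolynomial.eval_mul, MvPolynomial.eval_X]
      rw [this]; exact isRestr_mul hP (h j)

lemma isRestr_dichotomy {f : ℤ_[p] → ℚ_[p]} (hf : IsRestr f) :
    (∀ t, f t = 0) ∨ {m : ℕ | f (m : ℤ_[p]) = 0}.Finite := by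
  obtain ⟨b, hb, hform⟩ := hf
  rcases pa_dichotomy b hb with h | h
  · left; intro t; rw [hform]; exact h t
  · right
    refine h.subset ?_
    intro m hm
    rw [Set.mem_setOf_eq, ← hform]
    exact hm

end StrassmannTools

/-- Orbits hitting a subvariety along arithmetic progressions: let `F : ℤ_p^n → ℤ_p^n`
be analytic with an orbit uniformization for the point `x`: there are `N ≥ 1` and, for
each residue `i < N`, a `p`-adic analytic map `θ_i : ℤ_p → ℚ_p^n` (given coordinatewise
by power series with coefficients tending to `0`) with `θ_i(k) = F^{∘(Nk+i)}(x)` for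
all `k ∈ ℕ`.  If `V ⊆ ℤ_p^n` is the zero set of a finite set `Ps` of polynomials, then
`{m : F^{∘m}(x) ∈ V}` is the union of a finite set and finitely many arithmetic
progressions with common difference `N`. -/
theorem return_times_arithmetic_progressions (p : ℕ) [Fact p.Prime] (n : ℕ)
    (F : (Fin n → ℤ_[p]) → (Fin n → ℤ_[p])) (x : Fin n → ℤ_[p])
    (N : ℕ) (hN : 0 < N)
    (θ : Fin N → ℤ_[p] → (Fin n → ℚ_[p]))
    (hanal : ∀ i : Fin N, ∃ b : ℕ → Fin n → ℚ_[p],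
      (∀ j, Filter.Tendsto (fun k => ‖b k j‖) Filter.atTop (nhds 0)) ∧
      ∀ (t : ℤ_[p]) (j : Fin n), θ i t j = ∑' k : ℕ, b k j * (t : ℚ_[p]) ^ k)
    (hθ : ∀ (i : Fin N) (k : ℕ) (j : Fin n),
      θ i (k : ℤ_[p]) j = ((F^[N * k + i] x j : ℤ_[p]) : ℚ_[p]))
    (Ps : Finset (MvPolynomial (Fin n) ℚ_[p])) :
    ∃ (S : Finset ℕ) (I : Finset (Fin N)),
      { m : ℕ | ∀ P ∈ Ps, MvPolynomial.eval (fun j => ((F^[m] x j : ℤ_[p]) : ℚ_[p])) P = 0 }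
        = ↑S ∪ ⋃ i ∈ I, { m : ℕ | ∃ k : ℕ, m = N * k + i } := by
  classical
  have hcoord : ∀ (i : Fin N) (j : Fin n), IsRestr (fun t => θ i t j) := by
    intro i j
    obtain ⟨b, hdec, hform⟩ := hanal i
    exact ⟨fun k => b k j, by rw [Nat.cofinite_eq_atTop]; exact hdec j, fun t => hform t j⟩
  set Z : Fin N → Set ℕ :=
    fun i => {k | ∀ P ∈ Ps, MvPolynomial.eval (θ i (k : ℤ_[p])) P = 0} with hZ
  have hdich : ∀ i : Fin N,
      (∀ t : ℤ_[p], ∀ P ∈ Ps, MvPolynomial.eval (θ i t) P = 0) ∨ (Z i).Finite := by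
    intro i
    by_cases hall : ∀ P ∈ Ps, ∀ t : ℤ_[p], MvPolynomial.eval (θ i t) P = 0
    · left; intro t P hP; exact hall P hP t
    · right
      push_neg at hall
      obtain ⟨P, hP, hnot⟩ := hall
      rcases isRestr_dichotomy (isRestr_eval (θ i) (hcoord i) P) with h | h
      · exact absurd h (by push_neg; exact hnot)
      · exact h.subset (fun k hk => hk P hP)
  set I : Finset (Fin N) := Finset.univ.filter
    (fun i => ∀ t : ℤ_[p], ∀ P ∈ Ps, MvPolynomial.eval (θ i t) P = 0) with hI
  have hfin : ∀ i : Fin N, i ∉ I → (Z i).Finite := by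
    intro i hi
    rcases hdich i with h | h
    · exact absurd (Finset.mem_filter.mpr ⟨Finset.mem_univ _, h⟩) hi
    · exact h
  set Zfin : Fin N → Finset ℕ :=
    fun i => if h : (Z i).Finite then h.toFinset else ∅ with hZfin
  set S : Finset ℕ := Finset.univ.biUnion
    (fun i : Fin N =>
      if i ∈ I then ∅ else (Zfin i).image (fun k => N * k + (i : ℕ))) with hS
  refine ⟨S, I, ?_⟩
  ext m
  have hmod : (m % N) < N := Nat.mod_lt _ hN
  set i₀ : Fin N := ⟨m % N, hmod⟩ with hi₀
  set k₀ : ℕ := m / N with hk₀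
  have hm : N * k₀ + (i₀ : ℕ) = m := Nat.div_add_mod m N
  have hlink : ∀ (i : Fin N) (k : ℕ), m = N * k + (i : ℕ) →
      ((∀ P ∈ Ps, MvPolynomial.eval (fun j => ((F^[m] x j : ℤ_[p]) : ℚ_[p])) P = 0)
        ↔ k ∈ Z i) := by
    intro i k hmk
    have heq : (fun j => ((F^[m] x j : ℤ_[p]) : ℚ_[p])) = θ i (k : ℤ_[p]) := by
      funext j
      rw [hmk]
      exact (hθ i k j).symm
    rw [heq]
    exact Iff.rfl
  simp only [Set.mem_setOf_eq, Set.mem_union]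
  constructor
  · intro hmem
    have hk : k₀ ∈ Z i₀ := (hlink i₀ k₀ hm.symm).mp hmem
    by_cases hiI : i₀ ∈ I
    · right
      rw [Set.mem_iUnion₂]
      exact ⟨i₀, hiI, ⟨k₀, hm.symm⟩⟩
    · left
      have hfin' := hfin i₀ hiI
      refine Finset.mem_coe.mpr (Finset.mem_biUnion.mpr ⟨i₀, Finset.mem_univ _, ?_⟩)
      rw [if_neg hiI]
      refine Finset.mem_image.mpr ⟨k₀, ?_, hm⟩
      rw [hZfin]
      simp only [dif_pos hfin']
      exact (Set.Finite.mem_toFinset hfin').mpr hk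
  · intro hmem
    rcases hmem with hmS | hmI
    · obtain ⟨i, _, hmem2⟩ := Finset.mem_biUnion.mp (Finset.mem_coe.mp hmS)
      by_cases hiI : i ∈ I
      · rw [if_pos hiI] at hmem2
        exact absurd hmem2 (Finset.notMem_empty m)
      · rw [if_neg hiI] at hmem2
        obtain ⟨k, hkmem, hkm⟩ := Finset.mem_image.mp hmem2
        have hfin' := hfin i hiI
        have hkZ : k ∈ Z i := by
          rw [hZfin] at hkmem
          simp only [dif_pos hfin'] at hkmem
          exact (Set.Finite.mem_toFinset hfin').mp hkmem
        exact (hlink i k hkm.symm).mpr hkZ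
    · rw [Set.mem_iUnion₂] at hmI
      obtain ⟨i, hiI, k, hkm⟩ := hmI
      have hiall := (Finset.mem_filter.mp hiI).2
      have hkZ : k ∈ Z i := fun P hP => hiall (k : ℤ_[p]) P hP
      exact (hlink i k hkm).mpr hkZ
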